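/- Let (K, w, A) be a weighted graph. Then the abelianization Ab(π₁(K, w, A)) is isomorphic to the direct sum of the free abelian group on the set of edges of K not lying in A (which is the first simplicial homology group H₁(K; ℤ) of the graph K) with the direct sum ⨁_{ab ∈ A} ℤ/w(ab) over the edges ab of A. -/

import Mathlib

open scoped Classical

variable {V : Type*}

/-- Generators of the weighted fundamental group: edges `ab` of `K` with `a < b`. -/
def WGen [LinearOrder V] (K : SimpleGraph V) : Type _ :=
  {p : V × V // p.1 < p.2 ∧ K.Adj p.1 p.2}

/-- The relators of the weighted fundamental group: (1) `g_{ab}^{w(ab)}` for edges of the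
spanning tree `A`; (2) `g_{ab}^{w(ab)} · (g_{av}^{w(av)} · g_{vb}^{w(vb)})⁻¹` for 2-simplices
`{a, v, b} ∈ T` with `a < v < b`. -/
def WRelators [LinearOrder V] (K : SimpleGraph V) (T : Set (Finset V))
    (w : Sym2 V → ℤ) (A : SimpleGraph V) : Set (FreeGroup (WGen K)) :=
  {r | ∃ e : WGen K, A.Adj e.1.1 e.1.2 ∧ r = FreeGroup.of e ^ w s(e.1.1, e.1.2)} ∪
  {r | ∃ (a v b : V) (hav : a < v) (hvb : v < b)
       (h1 : K.Adj a v) (h2 : K.Adj v b) (h3 : K.Adj a b),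
       ({a, v, b} : Finset V) ∈ T ∧
       r = FreeGroup.of (⟨(a, b), hav.trans hvb, h3⟩ : WGen K) ^ w s(a, b) *
         (FreeGroup.of (⟨(a, v), hav, h1⟩ : WGen K) ^ w s(a, v) *
          FreeGroup.of (⟨(v, b), hvb, h2⟩ : WGen K) ^ w s(v, b))⁻¹}

/-- The weighted fundamental group `π₁(K, w, A)` of the WSC `(K, T, w, A)`,
as a presented group. -/
def wpi1 [LinearOrder V] (K : SimpleGraph V) (T : Set (Finset V))
    (w : Sym2 V → ℤ) (A : SimpleGraph V) : Type _ :=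
  PresentedGroup (WRelators K T w A)

noncomputable instance [LinearOrder V] (K : SimpleGraph V) (T : Set (Finset V))
    (w : Sym2 V → ℤ) (A : SimpleGraph V) : Group (wpi1 K T w A) := by
  unfold wpi1; infer_instance

/-- `(K, T, w, A)` is a weighted simplicial complex: `K` is a connected simple graph,
`T` is a set of 2-simplices (unordered triples of distinct pairwise adjacent vertices),
and `A` is a spanning tree of `K`. -/
structure IsWSC (K : SimpleGraph V) (T : Set (Finset V))
    (w : Sym2 V → ℤ) (A : SimpleGraph V) : Prop where
  conn : K.Connected
  tri : ∀ t ∈ T, ∃ a v b : V, a ≠ v ∧ v ≠ b ∧ a ≠ b ∧ t = {a, v, b} ∧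
        K.Adj a v ∧ K.Adj v b ∧ K.Adj a b
  tree : A.IsTree
  le : A ≤ K

/-- Exactly two of the three edges of every 2-simplex of `T` lie in the tree `A`. -/
def ExactlyTwo [LinearOrder V] (T : Set (Finset V)) (A : SimpleGraph V) : Prop :=
  ∀ a v b : V, a < v → v < b → ({a, v, b} : Finset V) ∈ T →
    ((if A.Adj a b then 1 else 0) + (if A.Adj a v then 1 else 0) +
      (if A.Adj v b then 1 else 0) : ℕ) = 2

open scoped DirectSum

section Aux

variable [LinearOrder V] (K : SimpleGraph V) (w : Sym2 V → ℤ) (A : SimpleGraph V)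

/-- The target abelian group. -/
private abbrev WTarget : Type _ :=
  FreeAbelianGroup {e : WGen K // ¬ A.Adj e.1.1 e.1.2} ×
    ⨁ e : {e : WGen K // A.Adj e.1.1 e.1.2}, ZMod (w s(e.1.1.1, e.1.1.2)).natAbs

private noncomputable def wfGen (e : WGen K) : Multiplicative (WTarget K w A) :=
  Multiplicative.ofAdd <|
    if h : A.Adj e.1.1 e.1.2 then
      (0, DirectSum.of
        (fun s : {e : WGen K // A.Adj e.1.1 e.1.2} => ZMod (w s(s.1.1.1, s.1.1.2)).natAbs)
        ⟨e, h⟩ 1)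
    else (FreeAbelianGroup.of ⟨e, h⟩, 0)

private lemma wf_rel : ∀ r ∈ WRelators K (∅ : Set (Finset V)) w A,
    FreeGroup.lift (wfGen K w A) r = 1 := by
  rintro r (⟨e, he, rfl⟩ | ⟨a, v, b, hav, hvb, h1, h2, h3, hT, rfl⟩)
  · rw [map_zpow, FreeGroup.lift_apply_of, wfGen, dif_pos he, ← ofAdd_zsmul]
    have : (w s(e.1.1, e.1.2) •
        ((0, DirectSum.of
          (fun s : {e : WGen K // A.Adj e.1.1 e.1.2} => ZMod (w s(s.1.1.1, s.1.1.2)).natAbs)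
          ⟨e, he⟩ 1) : WTarget K w A)) = 0 := by
      rw [Prod.smul_def, smul_zero, ← map_zsmul, zsmul_one]
      have hz : ((w s(e.1.1, e.1.2) : ℤ) : ZMod (w s(e.1.1, e.1.2)).natAbs) = 0 := by
        rw [ZMod.intCast_zmod_eq_zero_iff_dvd]
        exact Int.natAbs_dvd.mpr dvd_rfl
      rw [hz, map_zero]
      rfl
    rw [this]
    rfl
  · exact absurd hT (Set.notMem_empty _)

/-- The forward homomorphism. -/
private noncomputable def wF :
    Abelianization (PresentedGroup (WRelators K (∅ : Set (Finset V)) w A)) →*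
      Multiplicative (WTarget K w A) :=
  Abelianization.lift (PresentedGroup.toGroup (wf_rel K w A))

/-- The class of a generator in the abelianization. -/
private def wc (e : WGen K) :
    Additive (Abelianization (PresentedGroup (WRelators K (∅ : Set (Finset V)) w A))) :=
  Additive.ofMul (Abelianization.of (PresentedGroup.of e))

private lemma wc_rel (e : WGen K) (he : A.Adj e.1.1 e.1.2) :
    (((w s(e.1.1, e.1.2)).natAbs : ℤ)) • wc K w A e = 0 := by
  have hmem : (FreeGroup.of e ^ w s(e.1.1, e.1.2)) ∈ WRelators K (∅ : Set (Finset V)) w A :=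
    Or.inl ⟨e, he, rfl⟩
  have h1 : (PresentedGroup.of e : PresentedGroup (WRelators K (∅ : Set (Finset V)) w A)) ^
      w s(e.1.1, e.1.2) = 1 := by
    show (QuotientGroup.mk (FreeGroup.of e ^ w s(e.1.1, e.1.2)) :
      PresentedGroup (WRelators K (∅ : Set (Finset V)) w A)) = 1
    rw [QuotientGroup.eq_one_iff]
    exact Subgroup.subset_normalClosure hmem
  have h2 : (PresentedGroup.of e : PresentedGroup (WRelators K (∅ : Set (Finset V)) w A)) ^
      (((w s(e.1.1, e.1.2)).natAbs : ℤ)) = 1 := by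
    rcases Int.natAbs_eq (w s(e.1.1, e.1.2)) with h | h
    · rw [← h]; exact h1
    · rw [show ((w s(e.1.1, e.1.2)).natAbs : ℤ) = -(w s(e.1.1, e.1.2)) by omega,
        zpow_neg, h1, inv_one]
  show Additive.ofMul ((Abelianization.of (PresentedGroup.of e)) ^
    ((w s(e.1.1, e.1.2)).natAbs : ℤ)) = 0
  rw [← map_zpow, h2, map_one]
  rfl

/-- The backward homomorphism, additively. -/
private noncomputable def wB : WTarget K w A →+
    Additive (Abelianization (PresentedGroup (WRelators K (∅ : Set (Finset V)) w A))) :=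
  (FreeAbelianGroup.lift fun s => wc K w A s.1).coprod
    (DirectSum.toAddMonoid fun s => ZMod.lift _
      ⟨zmultiplesHom _ (wc K w A s.1), wc_rel K w A s.1 s.2⟩)

private lemma zmodHomExt {n : ℕ} {M : Type*} [AddGroup M] {f g : ZMod n →+ M}
    (h : f 1 = g 1) : f = g := by
  ext x
  obtain ⟨k, rfl⟩ := ZMod.intCast_surjective x
  rw [show ((k : ℤ) : ZMod n) = k • (1 : ZMod n) by rw [zsmul_one], map_zsmul, map_zsmul, h]

end Aux

/-- Proposition 5.6. For a weighted graph `(K, w, A)`, the abelianization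
of `π₁(K, w, A)` is the direct sum of the free abelian group on the edges of `K` not lying in
`A` (which is the first simplicial homology group `H₁(K; ℤ)` of the graph `K`) with the direct
sum `⨁_{ab ∈ A} ℤ/w(ab)` over the edges `ab` of `A`. -/
theorem abelianization_weighted_pi1_graph [LinearOrder V] (K : SimpleGraph V)
    (w : Sym2 V → ℤ) (A : SimpleGraph V) (hwsc : IsWSC K (∅ : Set (Finset V)) w A) :
    Nonempty (Additive (Abelianization (wpi1 K (∅ : Set (Finset V)) w A)) ≃+
      FreeAbelianGroup {e : WGen K // ¬ A.Adj e.1.1 e.1.2} ×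
        ⨁ e : {e : WGen K // A.Adj e.1.1 e.1.2}, ZMod (w s(e.1.1.1, e.1.1.2)).natAbs) := by
  classical
  refine ⟨?_⟩
  have F := wF K w A
  let ψ : Multiplicative (WTarget K w A) →*
      Abelianization (PresentedGroup (WRelators K (∅ : Set (Finset V)) w A)) :=
    AddMonoidHom.toMultiplicativeLeft (wB K w A)
  have hFof : ∀ x : WGen K, wF K w A (Abelianization.of (PresentedGroup.of x)) =
      wfGen K w A x := by
    intro x; simp [wF]
  have hψ : ∀ x : WGen K, ψ (wfGen K w A x) = Abelianization.of (PresentedGroup.of x) := by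
    intro x
    show Additive.toMul (wB K w A (Multiplicative.toAdd (wfGen K w A x))) = _
    rw [wfGen]
    by_cases h : A.Adj x.1.1 x.1.2
    · rw [dif_pos h]
      show Additive.toMul (wB K w A
        (0, DirectSum.of (fun s : {e : WGen K // A.Adj e.1.1 e.1.2} =>
          ZMod (w s(s.1.1.1, s.1.1.2)).natAbs) ⟨x, h⟩ 1)) = _
      rw [wB, AddMonoidHom.coprod_apply, map_zero, zero_add, DirectSum.toAddMonoid_of,
        show (1 : ZMod (w s(x.1.1, x.1.2)).natAbs) = ((1 : ℤ) : ZMod (w s(x.1.1, x.1.2)).natAbs)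
          by rw [Int.cast_one],
        ZMod.lift_coe]
      show Additive.toMul ((1 : ℤ) • wc K w A x) = _
      rw [one_zsmul]
      rfl
    · rw [dif_neg h]
      show Additive.toMul (wB K w A ((FreeAbelianGroup.of ⟨x, h⟩, 0) : WTarget K w A)) = _
      rw [wB, AddMonoidHom.coprod_apply, map_zero, add_zero, FreeAbelianGroup.lift_apply_of]
      rfl
  have h1 : ψ.comp (wF K w A) = MonoidHom.id _ := by
    apply Abelianization.hom_ext
    apply PresentedGroup.ext
    intro x
    simp only [MonoidHom.comp_apply, MonoidHom.id_apply]
    rw [hFof, hψ]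
  have hleft : ∀ t : {e : WGen K // ¬ A.Adj e.1.1 e.1.2},
      (MonoidHom.toAdditiveLeft (wF K w A)) (wB K w A
        ((FreeAbelianGroup.of t, 0) : WTarget K w A)) = (FreeAbelianGroup.of t, 0) := by
    intro t
    rw [wB, AddMonoidHom.coprod_apply, map_zero, add_zero, FreeAbelianGroup.lift_apply_of]
    show Multiplicative.toAdd (wF K w A (Abelianization.of (PresentedGroup.of t.1))) = _
    rw [hFof, wfGen, dif_neg t.2]
    rfl
  have hright : ∀ t : {e : WGen K // A.Adj e.1.1 e.1.2},
      (MonoidHom.toAdditiveLeft (wF K w A)) (wB K w A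
        ((0, DirectSum.of (fun s : {e : WGen K // A.Adj e.1.1 e.1.2} =>
          ZMod (w s(s.1.1.1, s.1.1.2)).natAbs) t 1) : WTarget K w A)) =
        (0, DirectSum.of (fun s : {e : WGen K // A.Adj e.1.1 e.1.2} =>
          ZMod (w s(s.1.1.1, s.1.1.2)).natAbs) t 1) := by
    intro t
    rw [wB, AddMonoidHom.coprod_apply, map_zero, zero_add, DirectSum.toAddMonoid_of,
      show (1 : ZMod (w s(t.1.1.1, t.1.1.2)).natAbs) =
        ((1 : ℤ) : ZMod (w s(t.1.1.1, t.1.1.2)).natAbs) by rw [Int.cast_one],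
      ZMod.lift_coe]
    show (MonoidHom.toAdditiveLeft (wF K w A)) ((1 : ℤ) • wc K w A t.1) = _
    rw [one_zsmul]
    show Multiplicative.toAdd (wF K w A (Abelianization.of (PresentedGroup.of t.1))) = _
    rw [hFof, wfGen, dif_pos t.2]
    rw [toAdd_ofAdd, Int.cast_one]
  have hcomp : (MonoidHom.toAdditiveLeft (wF K w A)).comp (wB K w A) =
      AddMonoidHom.id (WTarget K w A) := by
    have h1hom : ((MonoidHom.toAdditiveLeft (wF K w A)).comp (wB K w A)).comp
        (AddMonoidHom.inl _ _) = AddMonoidHom.inl _ _ := by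
      refine FreeAbelianGroup.lift_ext _ _ fun t => ?_
      simp only [AddMonoidHom.comp_apply, AddMonoidHom.inl_apply]
      exact hleft t
    have h2hom : ((MonoidHom.toAdditiveLeft (wF K w A)).comp (wB K w A)).comp
        (AddMonoidHom.inr _ _) = AddMonoidHom.inr _ _ := by
      refine DirectSum.addHom_ext' fun t => zmodHomExt ?_
      simp only [AddMonoidHom.comp_apply, AddMonoidHom.inr_apply]
      exact hright t
    refine AddMonoidHom.ext fun s => ?_
    have e1 : (MonoidHom.toAdditiveLeft (wF K w A)) (wB K w A ((s.1, 0) : WTarget K w A)) =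
        ((s.1, 0) : WTarget K w A) := DFunLike.congr_fun h1hom s.1
    have e2 : (MonoidHom.toAdditiveLeft (wF K w A)) (wB K w A ((0, s.2) : WTarget K w A)) =
        ((0, s.2) : WTarget K w A) := DFunLike.congr_fun h2hom s.2
    show (MonoidHom.toAdditiveLeft (wF K w A)) (wB K w A s) = s
    have hs : s = ((s.1, 0) : WTarget K w A) + ((0, s.2) : WTarget K w A) := by
      ext <;> simp
    conv_lhs => rw [hs]
    rw [map_add, map_add, e1, e2, ← hs]
  have h2 : (wF K w A).comp ψ = MonoidHom.id _ := by
    refine MonoidHom.ext fun x => ?_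
    exact Multiplicative.toAdd.injective (DFunLike.congr_fun hcomp (Multiplicative.toAdd x))
  exact MulEquiv.toAdditiveLeft (MonoidHom.toMulEquiv (wF K w A) ψ h1 h2)
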